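/- Let Θ and X be finite nonempty sets, u : X × Θ → ℝ, and let x : Θ → X be a DETERMINISTIC cyclically monotone social choice function (identified with the map θ ↦ δ_{x(θ)} into Δ(X)). Fix a quota q ∈ Δ(Θ), an integer K ≥ 1, and a type vector θ = (θ^1,…,θ^K) ∈ Θ^K. Then there exists a feasible report vector r = (r^1,…,r^K) at quota q that maximizes the payoff (1/K)·Σ_k ū(x(r^k),θ^k) among all feasible report vectors at quota q and that satisfies (1/K)·Σ_{k=1}^K ‖x(r^k) − δ_{x(θ^k)}‖ ≤ (|x(Θ)| − 1)·‖x_*(q) − x_*(marg θ)‖, where x_*(p) ∈ Δ(X) denotes the pushforward x_*(p)(a) = Σ_{θ' : x(θ') = a} p(θ'), and x(r^k) = x_*(r^k). -/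

import Mathlib

open Finset

/-- `p` is a probability vector on the finite set `Z`. -/
def IsProbVec {Z : Type*} [Fintype Z] (p : Z → ℝ) : Prop :=
  (∀ z, 0 ≤ p z) ∧ ∑ z, p z = 1

/-- Total variation distance `‖p − q‖ = (1/2)·Σ_z |p z − q z|`. -/
noncomputable def tv {Z : Type*} [Fintype Z] (p q : Z → ℝ) : ℝ :=
  (∑ z, |p z - q z|) / 2

/-- Lifted utility: `ū(μ,θ) = Σ_a μ(a)·u(a,θ)` for a lottery `μ ∈ Δ(X)`. -/
noncomputable def ubar {Θ X : Type*} [Fintype X]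
    (u : X × Θ → ℝ) (μ : X → ℝ) (θ : Θ) : ℝ :=
  ∑ a, μ a * u (a, θ)

/-- Pushforward of `p ∈ Δ(Θ)` under the deterministic map `x : Θ → X`:
`x_*(p)(a) = Σ_{θ' : x θ' = a} p θ'`. -/
noncomputable def push {Θ X : Type*} [Fintype Θ] [DecidableEq X]
    (x : Θ → X) (p : Θ → ℝ) : X → ℝ :=
  fun a => ∑ θ' ∈ Finset.univ.filter (fun θ' => x θ' = a), p θ'

/-- Point mass at `a`. -/
noncomputable def delta {X : Type*} [DecidableEq X] (a : X) : X → ℝ :=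
  fun a' => if a' = a then 1 else 0

/-- A deterministic map `x : Θ → X` is cyclically monotone for the utility `u`. -/
def CyclMonoDet {Θ X : Type*} (u : X × Θ → ℝ) (x : Θ → X) : Prop :=
  ∀ J : ℕ, ∀ θs : Fin (J + 2) → Θ, Function.Injective θs →
    ∑ j, u (x (θs (j + 1)), θs j) ≤ ∑ j, u (x (θs j), θs j)

/-- `r = (r^1,…,r^K)` is a feasible report vector at quota `q`. -/
def Feasible {Θ : Type*} [Fintype Θ] (K : ℕ) (q : Θ → ℝ)
    (r : Fin K → Θ → ℝ) : Prop :=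
  (∀ k, IsProbVec (r k)) ∧ ∀ θ', (∑ k, r k θ') / K = q θ'

/-- Payoff of the report vector `r` at the type vector `θv` under the
deterministic social choice function `x`: `(1/K)·Σ_k ū(x_*(r^k),θ^k)`. -/
noncomputable def payoffDet {Θ X : Type*} [Fintype Θ] [Fintype X] [DecidableEq X]
    (u : X × Θ → ℝ) (x : Θ → X) (K : ℕ)
    (θv : Fin K → Θ) (r : Fin K → Θ → ℝ) : ℝ :=
  (∑ k, ubar u (push x (r k)) (θv k)) / K

/-- Empirical distribution of a type vector: `(marg θ)(θ') = |{k : θ^k = θ'}|/K`. -/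
noncomputable def marg {Θ : Type*} [Fintype Θ] [DecidableEq Θ] (K : ℕ)
    (θv : Fin K → Θ) : Θ → ℝ :=
  fun θ' => ((Finset.univ.filter (fun k => θv k = θ')).card : ℝ) / K
section Helpers
set_option linter.unusedSectionVars false

variable {Θ X : Type*} [Fintype Θ] [Fintype X] [DecidableEq X]

lemma sum_push (x : Θ → X) (v : Θ → ℝ) : ∑ a, push x v a = ∑ θ', v θ' := by
  simpa [push] using Finset.sum_fiberwise Finset.univ x v

lemma push_nonneg (x : Θ → X) {v : Θ → ℝ} (hv : ∀ θ', 0 ≤ v θ') (a : X) :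
    0 ≤ push x v a :=
  Finset.sum_nonneg fun θ' _ => hv θ'

lemma push_probVec (x : Θ → X) {v : Θ → ℝ} (hv : IsProbVec v) :
    IsProbVec (push x v) :=
  ⟨push_nonneg x hv.1, by rw [sum_push]; exact hv.2⟩

lemma push_le_one (x : Θ → X) {v : Θ → ℝ} (hv : IsProbVec v) (a : X) :
    push x v a ≤ 1 := by
  have h := push_probVec x hv
  calc push x v a ≤ ∑ b, push x v b :=
        Finset.single_le_sum (fun b _ => h.1 b) (Finset.mem_univ a)
    _ = 1 := h.2

lemma tv_delta {μ : X → ℝ} (hμ : IsProbVec μ) (a : X) :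
    tv μ (delta a) = 1 - μ a := by
  have hle : μ a ≤ 1 := by
    calc μ a ≤ ∑ b, μ b := Finset.single_le_sum (fun b _ => hμ.1 b) (Finset.mem_univ a)
      _ = 1 := hμ.2
  have : ∑ b, |μ b - delta a b| = (1 - μ a) + (1 - μ a) := by
    rw [← Finset.add_sum_erase _ _ (Finset.mem_univ a)]
    have h1 : |μ a - delta a a| = 1 - μ a := by
      simp [delta, abs_of_nonpos, hle, abs_of_nonneg, sub_nonpos.2 hle, abs_sub_comm]
    have h2 : ∑ b ∈ Finset.univ.erase a, |μ b - delta a b| = 1 - μ a := by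
      have : ∀ b ∈ Finset.univ.erase a, |μ b - delta a b| = μ b := by
        intro b hb
        have hba : b ≠ a := (Finset.mem_erase.1 hb).1
        simp [delta, hba, abs_of_nonneg (hμ.1 b)]
      rw [Finset.sum_congr rfl this, Finset.sum_erase_eq_sub (Finset.mem_univ a), hμ.2]
    rw [h1, h2]
  rw [tv, this]; ring

lemma sum_sub_le_tv {p m : X → ℝ} (hpm : ∑ a, p a = ∑ a, m a) (s : Finset X) :
    ∑ a ∈ s, (p a - m a) ≤ tv p m := by
  have h1 : ∑ a ∈ s, (p a - m a) ≤ ∑ a ∈ s, max (p a - m a) 0 :=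
    Finset.sum_le_sum fun a _ => le_max_left _ _
  have h2 : ∑ a ∈ s, max (p a - m a) 0 ≤ ∑ a, max (p a - m a) 0 :=
    Finset.sum_le_sum_of_subset_of_nonneg (Finset.subset_univ s)
      (fun a _ _ => le_max_right _ _)
  have h3 : (∑ a, max (p a - m a) 0) = tv p m := by
    have : ∀ a, max (p a - m a) 0 = (|p a - m a| + (p a - m a)) / 2 := by
      intro a; rcases le_or_gt (p a - m a) 0 with h | h
      · rw [max_eq_right h, abs_of_nonpos h]; ring
      · rw [max_eq_left h.le, abs_of_pos h]; ring
    have h0 : ∑ a, (p a - m a) = 0 := by rw [Finset.sum_sub_distrib, hpm, sub_self]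
    rw [Finset.sum_congr rfl fun a _ => this a, ← Finset.sum_div,
      Finset.sum_add_distrib, h0, add_zero, tv]
  linarith

end Helpers
section Cycle

lemma transGen_path {α : Type*} {E : α → α → Prop} {a b : α}
    (h : Relation.TransGen E a b) :
    ∃ L : ℕ, 0 < L ∧ ∃ g : ℕ → α, g 0 = a ∧ g L = b ∧ ∀ n < L, E (g n) (g (n + 1)) := by
  induction h with
  | @single b' hab =>
      refine ⟨1, one_pos, fun n => if n = 0 then a else b', by simp, by simp, ?_⟩
      intro n hn
      interval_cases n
      simpa using hab
  | @tail b' c' hab hbc ih =>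
      obtain ⟨L, hL, g, hg0, hgL, hedge⟩ := ih
      refine ⟨L + 1, Nat.succ_pos _, fun n => if n ≤ L then g n else c',
        by simp [hg0], by simp, ?_⟩
      intro n hn
      rcases lt_or_eq_of_le (Nat.lt_succ_iff.1 hn) with h | h
      · show E (if n ≤ L then g n else c') (if n + 1 ≤ L then g (n + 1) else c')
        rw [if_pos h.le, if_pos (Nat.succ_le_of_lt h)]
        exact hedge n h
      · subst h
        show E (if n ≤ n then g n else c') (if n + 1 ≤ n then g (n + 1) else c')
        rw [if_pos le_rfl, if_neg (by omega), hgL]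
        exact hbc

lemma exists_cycle {α : Type*} {E : α → α → Prop} (hirr : ∀ a, ¬ E a a) {a : α}
    (h : Relation.TransGen E a a) :
    ∃ (J : ℕ) (c : Fin (J + 2) → α), Function.Injective c ∧ ∀ j, E (c j) (c (j + 1)) := by
  classical
  obtain ⟨L, hL, g, hg0, hgL, hedge⟩ := transGen_path h
  have hL2 : 2 ≤ L := by
    by_contra hc
    have hL1 : L = 1 := by omega
    subst hL1
    exact hirr a (by have := hedge 0 one_pos; rwa [hg0, hgL] at this)
  set G : ℕ → α := fun n => g (n % L) with hG
  have hGedge : ∀ n, E (G n) (G (n + 1)) := by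
    intro n
    have h1 : n % L < L := Nat.mod_lt _ hL
    have h2 : (n + 1) % L = (n % L + 1) % L := by
      rw [Nat.add_mod n 1 L, Nat.mod_eq_of_lt (show 1 < L from hL2)]
    rcases Nat.lt_or_ge (n % L + 1) L with h3 | h3
    · have h4 : (n % L + 1) % L = n % L + 1 := Nat.mod_eq_of_lt h3
      show E (g (n % L)) (g ((n + 1) % L))
      rw [h2, h4]
      exact hedge _ h1
    · have h3' : n % L + 1 = L := le_antisymm (Nat.succ_le_of_lt h1) h3
      have h4 : (n % L + 1) % L = 0 := by rw [h3', Nat.mod_self]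
      have h5 := hedge (n % L) h1
      rw [h3', hgL, ← hg0] at h5
      show E (g (n % L)) (g ((n + 1) % L))
      rw [h2, h4]
      exact h5
  have hP : ∃ d, 0 < d ∧ ∃ i, G i = G (i + d) := by
    refine ⟨L, hL, 0, ?_⟩
    show g (0 % L) = g ((0 + L) % L)
    rw [Nat.zero_mod, Nat.zero_add, Nat.mod_self]
  obtain ⟨hd, i, hGi⟩ := Nat.find_spec hP
  have hd2 : 2 ≤ Nat.find hP := by
    rcases Nat.lt_or_ge (Nat.find hP) 2 with hc | hc
    · exfalso
      have hd1 : Nat.find hP = 1 := by omega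
      rw [hd1] at hGi
      have h5 := hGedge i
      rw [← hGi] at h5
      exact hirr _ h5
    · exact hc
  obtain ⟨J, hJ⟩ : ∃ J, Nat.find hP = J + 2 := ⟨Nat.find hP - 2, by omega⟩
  rw [hJ] at hGi
  refine ⟨J, fun j => G (i + j.val), ?_, ?_⟩
  · have key : ∀ s t : Fin (J + 2), s.val < t.val → G (i + s.val) ≠ G (i + t.val) := by
      intro s t hst hEq
      have h1 : G (i + s.val) = G ((i + s.val) + (t.val - s.val)) := by
        rw [show (i + s.val) + (t.val - s.val) = i + t.val by omega]
        exact hEq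
      have h2 : t.val - s.val < Nat.find hP := by
        rw [hJ]; have := t.isLt; omega
      exact Nat.find_min hP h2 ⟨by omega, i + s.val, h1⟩
    intro s t hst
    by_contra hne
    rcases Nat.lt_or_ge s.val t.val with hlt | hge
    · exact key s t hlt hst
    · have hlt : t.val < s.val := by
        rcases Nat.lt_or_ge t.val s.val with h | h
        · exact h
        · exact absurd (Fin.val_injective (le_antisymm h hge)) hne
      exact key t s hlt hst.symm
  · intro j
    have hval : ((j + 1 : Fin (J + 2))).val = (j.val + 1) % (J + 2) := by
      simp [Fin.add_def]
    show E (G (i + j.val)) (G (i + ((j + 1 : Fin (J + 2))).val))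
    rcases Nat.lt_or_ge (j.val + 1) (J + 2) with hlt | hge
    · have hv : ((j + 1 : Fin (J + 2))).val = j.val + 1 := by
        rw [hval, Nat.mod_eq_of_lt hlt]
      rw [hv, show i + (j.val + 1) = i + j.val + 1 by omega]
      exact hGedge _
    · have hj : j.val + 1 = J + 2 := by have := j.isLt; omega
      have hv : ((j + 1 : Fin (J + 2))).val = 0 := by
        rw [hval, hj, Nat.mod_self]
      have h6 := hGedge (i + j.val)
      rw [show i + j.val + 1 = i + (J + 2) by omega, ← hGi] at h6
      rw [hv]
      simpa using h6

end Cycle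
section Exchange

variable {Θ X : Type*} [Fintype Θ] [Fintype X] [DecidableEq Θ] [DecidableEq X]

/-- The misreport relation has no cycles at an optimal, diagonal-maximal report vector. -/
lemma no_transGen_cycle
    (u : X × Θ → ℝ) (x : Θ → X) (hcm : CyclMonoDet u x)
    (q : Θ → ℝ) (K : ℕ) (hK : 1 ≤ K) (θv : Fin K → Θ)
    (r : Fin K → Θ → ℝ) (hfeas : Feasible K q r)
    (hopt : ∀ r', Feasible K q r' → payoffDet u x K θv r' ≤ payoffDet u x K θv r)
    (hmin : ∀ r', Feasible K q r' → payoffDet u x K θv r' = payoffDet u x K θv r →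
      ∑ k, push x (r' k) (x (θv k)) ≤ ∑ k, push x (r k) (x (θv k)))
    (a : X) :
    ¬ Relation.TransGen
      (fun a b => a ≠ b ∧ ∃ k', x (θv k') = a ∧ 0 < push x (r k') b) a a := by
  classical
  intro htg
  obtain ⟨J, c, hcinj, hcedge⟩ := exists_cycle (fun a ha => ha.1 rfl) htg
  choose kk hk1 hk2 using fun j => (hcedge j).2
  have hkkinj : Function.Injective kk := fun i j hij =>
    hcinj (by rw [← hk1 i, ← hk1 j, hij])
  set γ : Fin K → X → ℝ := fun k a => push x (r k) a with hγ
  have hne : (Finset.univ : Finset (Fin (J + 2))).Nonempty := ⟨0, Finset.mem_univ 0⟩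
  set ε : ℝ := Finset.univ.inf' hne (fun j => γ (kk j) (c (j + 1))) with hεdef
  have hε : 0 < ε := (Finset.lt_inf'_iff hne).2 fun j _ => hk2 j
  have hεle : ∀ j, ε ≤ γ (kk j) (c (j + 1)) := fun j =>
    Finset.inf'_le _ (Finset.mem_univ j)
  set s : Fin (J + 2) → Θ → ℝ := fun j θ' =>
    if x θ' = c (j + 1) then (ε / γ (kk j) (c (j + 1))) * r (kk j) θ' else 0 with hs
  have hsnonneg : ∀ j θ', 0 ≤ s j θ' := by
    intro j θ'
    simp only [hs]
    split
    · exact mul_nonneg (div_nonneg hε.le (hk2 j).le) ((hfeas.1 (kk j)).1 θ')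
    · exact le_refl 0
  have hsle : ∀ j θ', s j θ' ≤ r (kk j) θ' := by
    intro j θ'
    simp only [hs]
    split
    · have h1 : ε / γ (kk j) (c (j + 1)) ≤ 1 := (div_le_one (hk2 j)).2 (hεle j)
      calc (ε / γ (kk j) (c (j + 1))) * r (kk j) θ' ≤ 1 * r (kk j) θ' :=
            mul_le_mul_of_nonneg_right h1 ((hfeas.1 (kk j)).1 θ')
        _ = r (kk j) θ' := one_mul _
    · exact (hfeas.1 (kk j)).1 θ'
  have hpushs : ∀ j a, push x (s j) a = if a = c (j + 1) then ε else 0 := by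
    intro j a
    rcases eq_or_ne a (c (j + 1)) with h | h
    · subst h
      rw [if_pos rfl]
      simp only [push, hs]
      rw [Finset.sum_congr rfl (fun θ' hθ' => if_pos (Finset.mem_filter.1 hθ').2),
        ← Finset.mul_sum]
      have h2 : ∑ θ' ∈ Finset.univ.filter (fun θ' => x θ' = c (j + 1)), r (kk j) θ' =
          γ (kk j) (c (j + 1)) := rfl
      rw [h2, div_mul_cancel₀ _ (ne_of_gt (hk2 j))]
    · rw [if_neg h]
      simp only [push, hs]
      apply Finset.sum_eq_zero
      intro θ' hθ'
      rw [if_neg (by rw [(Finset.mem_filter.1 hθ').2]; exact h)]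
  have hssum : ∀ j, ∑ θ', s j θ' = ε := by
    intro j
    rw [← sum_push x (s j), Finset.sum_congr rfl (fun a _ => hpushs j a),
      Finset.sum_ite_eq' _ (c (j + 1)) (fun _ => ε)]
    simp
  set r' : Fin K → Θ → ℝ := fun k' θ' =>
    r k' θ' + ∑ j, if kk j = k' then s (j - 1) θ' - s j θ' else 0 with hr'
  have hcollapse : ∀ (F : Fin (J + 2) → ℝ) (j : Fin (J + 2)),
      (∑ i, if kk i = kk j then F i else 0) = F j := by
    intro F j
    rw [Finset.sum_eq_single_of_mem j (Finset.mem_univ j) (fun i _ hij =>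
      if_neg (fun h => hij (hkkinj h))), if_pos rfl]
  have hr'at : ∀ j θ', r' (kk j) θ' = r (kk j) θ' + (s (j - 1) θ' - s j θ') := by
    intro j θ'
    simp only [hr']
    rw [hcollapse (fun i => s (i - 1) θ' - s i θ') j]
  have hr'other : ∀ k', (∀ j, kk j ≠ k') → r' k' = r k' := by
    intro k' hk'
    funext θ'
    simp only [hr']
    rw [Finset.sum_eq_zero (fun j _ => if_neg (hk' j)), add_zero]
  have hfeas' : Feasible K q r' := by
    constructor
    · intro k'
      constructor
      · intro θ'
        by_cases hex : ∃ j, kk j = k'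
        · obtain ⟨j, rfl⟩ := hex
          rw [hr'at j θ']
          have h1 := hsle j θ'
          have h2 := hsnonneg (j - 1) θ'
          linarith
        · rw [hr'other k' (fun j h => hex ⟨j, h⟩)]
          exact (hfeas.1 k').1 θ'
      · simp only [hr']
        rw [Finset.sum_add_distrib, (hfeas.1 k').2, Finset.sum_comm]
        have h1 : ∀ j, (∑ θ', if kk j = k' then s (j - 1) θ' - s j θ' else 0) = 0 := by
          intro j
          split
          · rw [Finset.sum_sub_distrib, hssum, hssum, sub_self]
          · exact Finset.sum_const_zero
        rw [Finset.sum_congr rfl (fun j _ => h1 j), Finset.sum_const_zero, add_zero]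
    · intro θ'
      have key : ∑ k', r' k' θ' = ∑ k', r k' θ' := by
        simp only [hr']
        rw [Finset.sum_add_distrib]
        have h0 : ∑ k', ∑ j, (if kk j = k' then s (j - 1) θ' - s j θ' else 0) = 0 := by
          rw [Finset.sum_comm]
          have h1 : ∀ j, (∑ k', if kk j = k' then s (j - 1) θ' - s j θ' else 0) =
              s (j - 1) θ' - s j θ' := by
            intro j
            rw [Finset.sum_ite_eq _ (kk j) (fun _ => s (j - 1) θ' - s j θ')]
            simp
          have hsh : (∑ j : Fin (J + 2), s (j - 1) θ') = ∑ j : Fin (J + 2), s j θ' :=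
            Fintype.sum_equiv (Equiv.subRight (1 : Fin (J + 2)))
              (fun j => s (j - 1) θ') (fun j => s j θ') (fun j => rfl)
          rw [Finset.sum_congr rfl (fun j _ => h1 j), Finset.sum_sub_distrib, hsh, sub_self]
        rw [h0, add_zero]
      rw [key]
      exact hfeas.2 θ'
  set W : Fin (J + 2) → X → ℝ := fun j a =>
    (if a = c j then ε else 0) - (if a = c (j + 1) then ε else 0) with hW
  have hpush' : ∀ k' a, push x (r' k') a =
      γ k' a + ∑ j, if kk j = k' then W j a else 0 := by
    intro k' a
    simp only [push, hr']
    rw [Finset.sum_add_distrib]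
    congr 1
    rw [Finset.sum_comm]
    apply Finset.sum_congr rfl
    intro j _
    split
    · rw [Finset.sum_sub_distrib]
      have h1 : ∑ θ' ∈ Finset.univ.filter (fun θ' => x θ' = a), s (j - 1) θ' =
          push x (s (j - 1)) a := rfl
      have h2 : ∑ θ' ∈ Finset.univ.filter (fun θ' => x θ' = a), s j θ' =
          push x (s j) a := rfl
      rw [h1, h2, hpushs, hpushs, sub_add_cancel, hW]
    · exact Finset.sum_const_zero
  have hWu : ∀ j (θ : Θ), ∑ a, W j a * u (a, θ) =
      ε * u (c j, θ) - ε * u (c (j + 1), θ) := by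
    intro j θ
    simp only [hW, sub_mul, ite_mul, zero_mul]
    rw [Finset.sum_sub_distrib,
      Finset.sum_ite_eq' _ (c j) (fun a => ε * u (a, θ)),
      Finset.sum_ite_eq' _ (c (j + 1)) (fun a => ε * u (a, θ))]
    simp
  have hterm : ∀ k', ubar u (push x (r' k')) (θv k') =
      ubar u (push x (r k')) (θv k') +
        ∑ j, if kk j = k' then ε * u (c j, θv k') - ε * u (c (j + 1), θv k') else 0 := by
    intro k'
    simp only [ubar]
    calc ∑ a, push x (r' k') a * u (a, θv k')
        = ∑ a, (γ k' a * u (a, θv k') +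
            ∑ j, (if kk j = k' then W j a else 0) * u (a, θv k')) := by
          apply Finset.sum_congr rfl
          intro a _
          rw [hpush' k' a, add_mul, Finset.sum_mul]
      _ = (∑ a, γ k' a * u (a, θv k')) +
            ∑ j, ∑ a, (if kk j = k' then W j a else 0) * u (a, θv k') := by
          rw [Finset.sum_add_distrib, Finset.sum_comm]
      _ = _ := by
          congr 1
          apply Finset.sum_congr rfl
          intro j _
          by_cases h : kk j = k'
          · simp only [if_pos h]
            exact hWu j (θv k')
          · simp only [if_neg h]
            simp
  have hsum' : ∑ k', ubar u (push x (r' k')) (θv k') =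
      (∑ k', ubar u (push x (r k')) (θv k')) +
        ε * ((∑ j, u (c j, θv (kk j))) - ∑ j, u (c (j + 1), θv (kk j))) := by
    rw [Finset.sum_congr rfl fun k' _ => hterm k', Finset.sum_add_distrib]
    congr 1
    rw [Finset.sum_comm]
    have hcoll2 : ∀ j, (∑ k', if kk j = k' then
        ε * u (c j, θv k') - ε * u (c (j + 1), θv k') else 0) =
        ε * u (c j, θv (kk j)) - ε * u (c (j + 1), θv (kk j)) := by
      intro j
      rw [Finset.sum_ite_eq _ (kk j)
        (fun k' => ε * u (c j, θv k') - ε * u (c (j + 1), θv k'))]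
      simp
    rw [Finset.sum_congr rfl (fun j _ => hcoll2 j), Finset.sum_sub_distrib,
      ← Finset.mul_sum, ← Finset.mul_sum, mul_sub]
  have hcmapp : ∑ j, u (c (j + 1), θv (kk j)) ≤ ∑ j, u (c j, θv (kk j)) := by
    have hinj : Function.Injective (fun j => θv (kk j)) := fun i j hij =>
      hcinj (by rw [← hk1 i, ← hk1 j]; exact congrArg x hij)
    have h := hcm J (fun j => θv (kk j)) hinj
    simpa only [hk1] using h
  have hKpos : (0 : ℝ) < K := by exact_mod_cast hK
  have hple : payoffDet u x K θv r ≤ payoffDet u x K θv r' := by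
    rw [payoffDet, payoffDet]
    have h2 : ∑ k', ubar u (push x (r k')) (θv k') ≤
        ∑ k', ubar u (push x (r' k')) (θv k') := by
      rw [hsum']
      nlinarith [hε, hcmapp]
    gcongr
  have hpeq : payoffDet u x K θv r' = payoffDet u x K θv r :=
    le_antisymm (hopt r' hfeas') hple
  have hdiag : ∑ k', push x (r' k') (x (θv k')) =
      (∑ k', push x (r k') (x (θv k'))) + ((J : ℝ) + 2) * ε := by
    rw [Finset.sum_congr rfl (fun k' _ => hpush' k' (x (θv k'))), Finset.sum_add_distrib]
    congr 1
    rw [Finset.sum_comm]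
    have hjj : ∀ j : Fin (J + 2), (∑ k', if kk j = k' then W j (x (θv k')) else 0) = ε := by
      intro j
      rw [Finset.sum_ite_eq _ (kk j) (fun k' => W j (x (θv k')))]
      simp only [Finset.mem_univ, if_true]
      rw [hk1 j]
      have hne' : c j ≠ c (j + 1) := by
        intro hcc
        have h1 : j = j + 1 := hcinj hcc
        have h2 : (1 : Fin (J + 2)) = 0 := (left_eq_add.mp h1).symm ▸ rfl
        have h3 : (1 : Fin (J + 2)) ≠ 0 := by
          simp [Fin.ext_iff]
        exact h3 (left_eq_add.mp h1)
      simp [hW, hne']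
    rw [Finset.sum_congr rfl (fun j _ => hjj j), Finset.sum_const, Finset.card_univ,
      Fintype.card_fin, nsmul_eq_mul]
    norm_cast
  have hlt := hmin r' hfeas' hpeq
  rw [hdiag] at hlt
  nlinarith [hε, (Nat.cast_nonneg J : (0 : ℝ) ≤ (J : ℝ))]

end Exchange
/-- Refined decision-space ex-post bound for a deterministic
social choice function. -/
theorem quota_expost_bound_deterministic {Θ X : Type*} [Fintype Θ] [Fintype X]
    [Nonempty Θ] [Nonempty X] [DecidableEq Θ] [DecidableEq X]
    (u : X × Θ → ℝ) (x : Θ → X) (hcm : CyclMonoDet u x)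
    (q : Θ → ℝ) (hq : IsProbVec q) (K : ℕ) (hK : 1 ≤ K) (θv : Fin K → Θ) :
    ∃ r : Fin K → Θ → ℝ, Feasible K q r ∧
      (∀ r' : Fin K → Θ → ℝ, Feasible K q r' →
        payoffDet u x K θv r' ≤ payoffDet u x K θv r) ∧
      (∑ k, tv (push x (r k)) (delta (x (θv k)))) / K ≤
        (((Finset.univ.image x).card : ℝ) - 1) *
          tv (push x q) (push x (marg K θv)) := by
  classical
  have hKpos : (0 : ℝ) < K := by exact_mod_cast hK
  have hKne : (K : ℝ) ≠ 0 := ne_of_gt hKpos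
  set S : Set (Fin K → Θ → ℝ) := {r | Feasible K q r} with hSdef
  have hSne : S.Nonempty := by
    refine ⟨fun _ => q, ⟨fun _ => hq, fun θ' => ?_⟩⟩
    rw [Finset.sum_const, Finset.card_univ, Fintype.card_fin, nsmul_eq_mul]
    field_simp
  have hSclosed : IsClosed S := by
    have h1 : S = (⋂ k, ⋂ θ', {r : Fin K → Θ → ℝ | 0 ≤ r k θ'}) ∩
        ((⋂ k, {r : Fin K → Θ → ℝ | ∑ θ', r k θ' = 1}) ∩
          (⋂ θ', {r : Fin K → Θ → ℝ | (∑ k, r k θ') / K = q θ'})) := by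
      ext r
      simp only [hSdef, Set.mem_inter_iff, Set.mem_iInter, Set.mem_setOf_eq,
        Feasible, IsProbVec]
      constructor
      · rintro ⟨h1, h2⟩
        exact ⟨fun k θ' => (h1 k).1 θ', fun k => (h1 k).2, h2⟩
      · rintro ⟨h1, h2, h3⟩
        exact ⟨fun k => ⟨h1 k, h2 k⟩, h3⟩
    rw [h1]
    refine IsClosed.inter ?_ (IsClosed.inter ?_ ?_)
    · exact isClosed_iInter fun k => isClosed_iInter fun θ' =>
        isClosed_le continuous_const ((continuous_apply θ').comp (continuous_apply k))
    · exact isClosed_iInter fun k => isClosed_eq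
        (continuous_finset_sum _ fun θ' _ => (continuous_apply θ').comp (continuous_apply k))
        continuous_const
    · exact isClosed_iInter fun θ' => isClosed_eq
        ((continuous_finset_sum _ fun k _ =>
          (continuous_apply θ').comp (continuous_apply k)).div_const _)
        continuous_const
  have hScompact : IsCompact S := by
    have hsub : S ⊆ Set.univ.pi (fun _ : Fin K => stdSimplex ℝ Θ) := by
      intro r hr
      rw [Set.mem_univ_pi]
      intro k
      exact ⟨(hr.1 k).1, (hr.1 k).2⟩
    exact IsCompact.of_isClosed_subset
      (isCompact_univ_pi fun _ => isCompact_stdSimplex ℝ Θ) hSclosed hsub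
  have hc_push : ∀ (k : Fin K) (a : X),
      Continuous (fun r : Fin K → Θ → ℝ => push x (r k) a) := by
    intro k a
    unfold push
    exact continuous_finset_sum _ fun θ' _ =>
      (continuous_apply θ').comp (continuous_apply k)
  have hpay_cont : Continuous (payoffDet u x K θv) := by
    unfold payoffDet ubar
    exact (continuous_finset_sum _ fun k _ => continuous_finset_sum _ fun a _ =>
      (hc_push k a).mul continuous_const).div_const _
  have hD_cont : Continuous (fun r : Fin K → Θ → ℝ =>
      ∑ k, push x (r k) (x (θv k))) :=
    continuous_finset_sum _ fun k _ => hc_push k _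
  obtain ⟨r₁, hr₁S, hr₁max⟩ := hScompact.exists_isMaxOn hSne hpay_cont.continuousOn
  set S' : Set (Fin K → Θ → ℝ) :=
    S ∩ {r | payoffDet u x K θv r = payoffDet u x K θv r₁} with hS'def
  have hS'ne : S'.Nonempty := ⟨r₁, hr₁S, rfl⟩
  have hS'compact : IsCompact S' :=
    IsCompact.of_isClosed_subset hScompact
      (hSclosed.inter (isClosed_eq hpay_cont continuous_const)) Set.inter_subset_left
  obtain ⟨r₀, hr₀S', hr₀max⟩ := hS'compact.exists_isMaxOn hS'ne hD_cont.continuousOn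
  have hr₀feas : Feasible K q r₀ := hr₀S'.1
  have hr₀opt : ∀ r', Feasible K q r' →
      payoffDet u x K θv r' ≤ payoffDet u x K θv r₀ := by
    intro r' hr'
    calc payoffDet u x K θv r' ≤ payoffDet u x K θv r₁ := hr₁max hr'
      _ = payoffDet u x K θv r₀ := hr₀S'.2.symm
  have hr₀min : ∀ r', Feasible K q r' →
      payoffDet u x K θv r' = payoffDet u x K θv r₀ →
      ∑ k, push x (r' k) (x (θv k)) ≤ ∑ k, push x (r₀ k) (x (θv k)) := by
    intro r' hr' hpeq
    exact hr₀max (Set.mem_inter hr' (by rw [Set.mem_setOf_eq, hpeq, hr₀S'.2]))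
  refine ⟨r₀, hr₀feas, hr₀opt, ?_⟩
  set γ : Fin K → X → ℝ := fun k a => push x (r₀ k) a with hγdef
  set ak : Fin K → X := fun k => x (θv k) with hakdef
  set I : Finset X := Finset.univ.image x with hIdef
  set n : ℕ := I.card with hndef
  set p : X → ℝ := push x q with hpdef
  set m : X → ℝ := push x (marg K θv) with hmdef
  have hIne : I.Nonempty := Finset.univ_nonempty.image x
  have hn1 : 1 ≤ n := Finset.card_pos.2 hIne
  set E : X → X → Prop :=
    fun a b => a ≠ b ∧ ∃ k', x (θv k') = a ∧ 0 < push x (r₀ k') b with hEdef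
  have hIrr : ∀ a, ¬ Relation.TransGen E a a :=
    no_transGen_cycle u x hcm q K hK θv r₀ hr₀feas hr₀opt hr₀min
  set f : X → ℕ := fun a => (I.filter (fun b => Relation.TransGen E b a)).card with hfdef
  have hf_edge : ∀ a b, E a b → f a < f b := by
    intro a b hab
    apply Finset.card_lt_card
    rw [Finset.ssubset_iff_of_subset]
    · refine ⟨a, ?_, ?_⟩
      · rw [Finset.mem_filter]
        obtain ⟨k', hk', _⟩ := hab.2
        exact ⟨Finset.mem_image.2 ⟨θv k', Finset.mem_univ _, hk'⟩,
          Relation.TransGen.single hab⟩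
      · rw [Finset.mem_filter]
        rintro ⟨_, hta⟩
        exact hIrr a hta
    · intro b' hb'
      rw [Finset.mem_filter] at hb' ⊢
      exact ⟨hb'.1, hb'.2.tail hab⟩
  have hf_lt : ∀ a ∈ I, f a < n := by
    intro a ha
    apply Finset.card_lt_card
    rw [Finset.ssubset_iff_of_subset (Finset.filter_subset _ _)]
    refine ⟨a, ha, ?_⟩
    rw [Finset.mem_filter]
    rintro ⟨_, hta⟩
    exact hIrr a hta
  have hγnonneg : ∀ k a, 0 ≤ γ k a := fun k a => push_nonneg x (hr₀feas.1 k).1 a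
  have hγsum : ∀ k, ∑ a, γ k a = 1 := fun k => (push_probVec x (hr₀feas.1 k)).2
  have hsuppI : ∀ k a, 0 < γ k a → a ∈ I := by
    intro k a hpos
    by_contra ha
    have hemp : Finset.univ.filter (fun θ' => x θ' = a) = ∅ := by
      rw [Finset.filter_eq_empty_iff]
      intro θ' _ hxa
      exact ha (Finset.mem_image.2 ⟨θ', Finset.mem_univ _, hxa⟩)
    have h0 : γ k a = 0 := by
      simp only [hγdef, push, hemp, Finset.sum_empty]
    rw [h0] at hpos
    exact lt_irrefl 0 hpos
  have hE_of : ∀ k a, 0 < γ k a → a ≠ ak k → E (ak k) a := by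
    intro k a hpos hne
    exact ⟨fun h => hne h.symm, k, rfl, hpos⟩
  have hf_supp : ∀ k a, 0 < γ k a → a = ak k ∨ f (ak k) < f a := by
    intro k a hpos
    by_cases h : a = ak k
    · exact Or.inl h
    · exact Or.inr (hf_edge _ _ (hE_of k a hpos h))
  have hcol : ∀ a, ∑ k, γ k a = K * p a := by
    intro a
    simp only [hγdef, hpdef, push]
    rw [Finset.sum_comm, Finset.mul_sum]
    apply Finset.sum_congr rfl
    intro θ' _
    have h := hr₀feas.2 θ'
    field_simp at h
    linarith [h]
  have hm : ∀ a, (K : ℝ) * m a =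
      ((Finset.univ.filter (fun k => ak k = a)).card : ℝ) := by
    intro a
    simp only [hmdef, push, marg]
    rw [← Finset.sum_div, mul_comm, div_mul_cancel₀ _ hKne]
    norm_cast
    rw [Finset.card_eq_sum_card_fiberwise
      (f := θv) (t := Finset.univ.filter (fun θ' => x θ' = a))
      (fun k hk => by
        rw [Finset.mem_coe, Finset.mem_filter] at hk ⊢
        exact ⟨Finset.mem_univ _, hk.2⟩)]
    apply Finset.sum_congr rfl
    intro θ' hθ'
    congr 1
    ext k
    simp only [Finset.mem_filter, Finset.mem_univ, true_and, hakdef]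
    constructor
    · intro h
      rw [Finset.mem_filter] at hθ'
      exact ⟨by rw [h]; exact hθ'.2, h⟩
    · rintro ⟨_, h⟩
      exact h
  have hpsum : ∑ a, p a = 1 := by rw [hpdef, sum_push]; exact hq.2
  have hmsum : ∑ a, m a = 1 := by
    rw [hmdef, sum_push]
    simp only [marg]
    rw [← Finset.sum_div, div_eq_one_iff_eq hKne]
    norm_cast
    rw [← Finset.card_eq_sum_card_fiberwise
      (f := θv) (t := (Finset.univ : Finset Θ)) (fun k _ => Finset.mem_univ (θv k))]
    simp
  -- Step B : each cut is at most `K * tv p m`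
  have stepB : ∀ t : ℕ, (∑ k, ∑ a, if f (ak k) ≤ t ∧ t < f a then γ k a else 0) ≤
      K * tv p m := by
    intro t
    set A : Finset X := Finset.univ.filter (fun a => t < f a) with hAdef
    have h1 : (∑ k, ∑ a, if f (ak k) ≤ t ∧ t < f a then γ k a else 0) =
        ∑ a ∈ A, ∑ k, (if f (ak k) ≤ t then γ k a else 0) := by
      rw [Finset.sum_comm]
      have hcongr : ∀ a, (∑ k, if f (ak k) ≤ t ∧ t < f a then γ k a else 0) =
          if t < f a then (∑ k, if f (ak k) ≤ t then γ k a else 0) else 0 := by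
        intro a
        by_cases h : t < f a
        · rw [if_pos h]
          apply Finset.sum_congr rfl
          intro k _
          by_cases h2 : f (ak k) ≤ t
          · rw [if_pos ⟨h2, h⟩, if_pos h2]
          · rw [if_neg (fun hc => h2 hc.1), if_neg h2]
        · rw [if_neg h]
          exact Finset.sum_eq_zero fun k _ => if_neg (fun hc => h hc.2)
      rw [Finset.sum_congr rfl fun a _ => hcongr a, ← Finset.sum_filter]
    have h2 : ∀ a, (∑ k, if f (ak k) ≤ t then γ k a else 0) =
        (∑ k, γ k a) - ∑ k, (if t < f (ak k) then γ k a else 0) := by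
      intro a
      rw [← Finset.sum_sub_distrib]
      apply Finset.sum_congr rfl
      intro k _
      by_cases h : f (ak k) ≤ t
      · rw [if_pos h, if_neg (by omega), sub_zero]
      · rw [if_neg h, if_pos (by omega), sub_self]
    have h4 : ∀ k, t < f (ak k) → (∑ a ∈ A, γ k a) = 1 := by
      intro k hk
      rw [← hγsum k]
      apply Finset.sum_subset (Finset.subset_univ A)
      intro a _ ha
      rw [hAdef, Finset.mem_filter] at ha
      push_neg at ha
      have hfa : ¬ t < f a := not_lt.2 (ha (Finset.mem_univ a))
      rcases eq_or_lt_of_le (hγnonneg k a) with h0 | h0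
      · exact h0.symm
      · exfalso
        rcases hf_supp k a h0 with h | h
        · rw [h] at hfa
          exact hfa hk
        · exact hfa (lt_trans hk h)
    have h5 : (∑ a ∈ A, ∑ k, (if t < f (ak k) then γ k a else 0)) =
        ∑ a ∈ A, (K : ℝ) * m a := by
      rw [Finset.sum_comm]
      have hswap : ∀ k, (∑ a ∈ A, if t < f (ak k) then γ k a else 0) =
          if t < f (ak k) then (1 : ℝ) else 0 := by
        intro k
        by_cases h : t < f (ak k)
        · rw [if_pos h, Finset.sum_congr rfl fun a _ => if_pos h, h4 k h]
        · rw [if_neg h, Finset.sum_eq_zero fun a _ => if_neg h]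
      rw [Finset.sum_congr rfl fun k _ => hswap k]
      have hcard : (∑ k, if t < f (ak k) then (1 : ℝ) else 0) =
          ((Finset.univ.filter (fun k => t < f (ak k))).card : ℝ) := by
        rw [← Finset.sum_filter, Finset.sum_const, nsmul_eq_mul, mul_one]
      rw [hcard]
      rw [Finset.sum_congr rfl fun a _ => hm a]
      norm_cast
      rw [Finset.card_eq_sum_card_fiberwise
        (f := ak) (t := A)
        (fun k hk => by
          rw [Finset.mem_coe, Finset.mem_filter] at hk
          rw [Finset.mem_coe, hAdef, Finset.mem_filter]
          exact ⟨Finset.mem_univ _, hk.2⟩)]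
      apply Finset.sum_congr rfl
      intro a ha
      congr 1
      ext k
      rw [hAdef, Finset.mem_filter] at ha
      simp only [Finset.mem_filter, Finset.mem_univ, true_and]
      constructor
      · rintro ⟨_, h⟩
        exact h
      · intro h
        exact ⟨by rw [h]; exact ha.2, h⟩
    have h6 : (∑ k, ∑ a, if f (ak k) ≤ t ∧ t < f a then γ k a else 0) =
        (K : ℝ) * ∑ a ∈ A, (p a - m a) := by
      rw [h1, Finset.sum_congr rfl fun a _ => h2 a, Finset.sum_sub_distrib, h5,
        Finset.sum_congr rfl fun a (_ : a ∈ A) => hcol a, ← Finset.sum_sub_distrib,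
        Finset.mul_sum]
      apply Finset.sum_congr rfl
      intro a _
      ring
    rw [h6]
    apply mul_le_mul_of_nonneg_left _ hKpos.le
    exact sum_sub_le_tv (hpsum.trans hmsum.symm) A
  -- Step A : the off-diagonal mass is at most the sum of the cuts
  have stepA : ∀ k, (∑ a ∈ Finset.univ.erase (ak k), γ k a) ≤
      ∑ t ∈ Finset.range (n - 1), ∑ a, (if f (ak k) ≤ t ∧ t < f a then γ k a else 0) := by
    intro k
    rw [Finset.sum_comm]
    have hc : ∀ a, (∑ t ∈ Finset.range (n - 1), if f (ak k) ≤ t ∧ t < f a then γ k a else 0) =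
        (((Finset.range (n - 1)).filter (fun t => f (ak k) ≤ t ∧ t < f a)).card : ℝ) *
          γ k a := by
      intro a
      rw [← Finset.sum_filter, Finset.sum_const, nsmul_eq_mul]
    rw [Finset.sum_congr rfl fun a _ => hc a,
      ← Finset.sum_erase_add _ _ (Finset.mem_univ (ak k))]
    have hzero : (((Finset.range (n - 1)).filter
        (fun t => f (ak k) ≤ t ∧ t < f (ak k))).card : ℝ) * γ k (ak k) = 0 := by
      have hemp : ((Finset.range (n - 1)).filter
          (fun t => f (ak k) ≤ t ∧ t < f (ak k))) = ∅ :=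
        Finset.filter_false_of_mem (fun t _ => by omega)
      rw [hemp]
      simp
    rw [hzero, add_zero]
    apply Finset.sum_le_sum
    intro a ha
    rcases eq_or_lt_of_le (hγnonneg k a) with h0 | h0
    · rw [← h0, mul_zero]
    · have hne : a ≠ ak k := Finset.ne_of_mem_erase ha
      have hEdge := hf_edge _ _ (hE_of k a h0 hne)
      have haI : a ∈ I := hsuppI k a h0
      have hfa : f a < n := hf_lt a haI
      have hmem : f (ak k) ∈ (Finset.range (n - 1)).filter
          (fun t => f (ak k) ≤ t ∧ t < f a) := by
        rw [Finset.mem_filter, Finset.mem_range]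
        exact ⟨by omega, le_rfl, hEdge⟩
      have hcard : (1 : ℝ) ≤ (((Finset.range (n - 1)).filter
          (fun t => f (ak k) ≤ t ∧ t < f a)).card : ℝ) := by
        exact_mod_cast Finset.card_pos.2 ⟨_, hmem⟩
      exact le_mul_of_one_le_left (hγnonneg k a) hcard
  -- assembling
  have hdiagtv : ∀ k, tv (push x (r₀ k)) (delta (ak k)) =
      ∑ a ∈ Finset.univ.erase (ak k), γ k a := by
    intro k
    rw [tv_delta (push_probVec x (hr₀feas.1 k)) (ak k),
      Finset.sum_erase_eq_sub (Finset.mem_univ (ak k)), hγsum]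
  have main : (∑ k, tv (push x (r₀ k)) (delta (ak k))) ≤
      ((n : ℝ) - 1) * (K * tv p m) := by
    calc (∑ k, tv (push x (r₀ k)) (delta (ak k)))
        = ∑ k, ∑ a ∈ Finset.univ.erase (ak k), γ k a :=
          Finset.sum_congr rfl fun k _ => hdiagtv k
      _ ≤ ∑ k, ∑ t ∈ Finset.range (n - 1), ∑ a,
            (if f (ak k) ≤ t ∧ t < f a then γ k a else 0) :=
          Finset.sum_le_sum fun k _ => stepA k
      _ = ∑ t ∈ Finset.range (n - 1), ∑ k, ∑ a,
            (if f (ak k) ≤ t ∧ t < f a then γ k a else 0) := Finset.sum_comm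
      _ ≤ ∑ _t ∈ Finset.range (n - 1), K * tv p m :=
          Finset.sum_le_sum fun t _ => stepB t
      _ = ((n - 1 : ℕ) : ℝ) * (K * tv p m) := by
          rw [Finset.sum_const, Finset.card_range, nsmul_eq_mul]
      _ = ((n : ℝ) - 1) * (K * tv p m) := by
          rw [Nat.cast_sub hn1, Nat.cast_one]
  rw [div_le_iff₀ hKpos]
  have hring : ((n : ℝ) - 1) * tv p m * K = ((n : ℝ) - 1) * (K * tv p m) := by ring
  rw [hring]
  exact main
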